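/- Let n ≥ 1 and let d : ZMod n → ℤ be a function with ∑ j, d j = 0 and |d j| ≤ M for all j. Then there exists a cyclic shift of the indices such that the partial sums S_j = ∑_{k=1}^{j} d k (for 0 ≤ j ≤ n) satisfy 0 ≤ S_j ≤ (n * M) / 2 for all j (in particular the minimum partial sum is 0 and the maximum is at most nM/2). -/

import Mathlib

/-- Key arithmetic lemma for constructing edge sequences: given `d : ZMod n → ℤ`
with zero total sum and `|d j| ≤ M`, there is a cyclic shift of indices so that
all partial sums lie in `[0, nM/2]`. -/

lemma sum_range_zmod {n : ℕ} [NeZero n] (f : ZMod n → ℤ) :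
    ∑ k ∈ Finset.range n, f k = ∑ x : ZMod n, f x := by
  refine Finset.sum_nbij' (fun k => (k : ZMod n)) (fun x => x.val) ?_ ?_ ?_ ?_ ?_
  · intro a _; exact Finset.mem_univ _
  · intro x _; exact Finset.mem_range.mpr (ZMod.val_lt x)
  · intro a ha; exact ZMod.val_cast_of_lt (Finset.mem_range.mp ha)
  · intro x _; exact ZMod.natCast_rightInverse x
  · intro a _; rfl

theorem cyclic_shift_partial_sums (n : ℕ) [NeZero n] (d : ZMod n → ℤ) (M : ℤ)
    (hsum : ∑ j, d j = 0) (hM : ∀ j, |d j| ≤ M) :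
    ∃ c : ZMod n, ∀ j ≤ n,
      0 ≤ ∑ k ∈ Finset.range j, d (c + (k + 1 : ℕ)) ∧
      ((∑ k ∈ Finset.range j, d (c + (k + 1 : ℕ)) : ℤ) : ℚ) ≤ (n * M) / 2 := by
  classical
  have hn : 0 < n := Nat.pos_of_ne_zero (NeZero.ne n)
  have hM0 : 0 ≤ M := le_trans (abs_nonneg _) (hM 0)
  set Sh : ZMod n → ℕ → ℤ := fun c j => ∑ k ∈ Finset.range j, d (c + (k + 1 : ℕ)) with hSh
  have hadd : ∀ (c : ZMod n) (a b : ℕ), Sh c (a + b) = Sh c a + Sh (c + (a : ZMod n)) b := by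
    intro c a b
    simp only [hSh]
    rw [Finset.sum_range_add]
    congr 1
    apply Finset.sum_congr rfl
    intro k _
    congr 1
    push_cast
    ring
  have hfull : ∀ c : ZMod n, Sh c n = 0 := by
    intro c
    have h1 : Sh c n = ∑ x : ZMod n, d (c + x + 1) := by
      rw [hSh]
      rw [← sum_range_zmod (fun x => d (c + x + 1))]
      apply Finset.sum_congr rfl
      intro k _
      congr 1
      push_cast
      ring
    rw [h1]
    rw [← hsum]
    exact Fintype.sum_equiv (Equiv.addLeft (c + 1)) _ _ (fun x => by
      simp [add_assoc, add_comm, add_left_comm])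
  -- choose minimizing index
  obtain ⟨m, hm, hmin⟩ := Finset.exists_min_image (Finset.range n) (Sh 0)
    ⟨0, Finset.mem_range.mpr hn⟩
  have hmlt : m < n := Finset.mem_range.mp hm
  have hSh0 : Sh 0 0 = 0 := by simp [hSh]
  have hminle : ∀ i ≤ n, Sh 0 m ≤ Sh 0 i := by
    intro i hi
    rcases eq_or_lt_of_le hi with rfl | hi
    · rw [hfull]
      calc Sh 0 m ≤ Sh 0 0 := hmin 0 (Finset.mem_range.mpr hn)
        _ = 0 := hSh0
    · exact hmin i (Finset.mem_range.mpr hi)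
  refine ⟨(m : ZMod n), fun j hj => ?_⟩
  have key : Sh (m : ZMod n) j = Sh 0 (m + j) - Sh 0 m := by
    rw [hadd 0 m j, zero_add]; ring
  have hnonneg : 0 ≤ Sh (m : ZMod n) j := by
    rw [key]
    rcases le_or_gt (m + j) n with h | h
    · linarith [hminle (m + j) h]
    · have hr : m + j = n + (m + j - n) := by omega
      have hrn : m + j - n ≤ n := by omega
      have wrap : Sh 0 (n + (m + j - n)) = Sh 0 (m + j - n) := by
        rw [hadd 0 n (m + j - n), hfull, ZMod.natCast_self, zero_add, add_zero]
      rw [hr, wrap]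
      linarith [hminle (m + j - n) hrn]
  refine ⟨hnonneg, ?_⟩
  have ub1 : Sh (m : ZMod n) j ≤ (j : ℤ) * M := by
    calc Sh (m : ZMod n) j ≤ ∑ k ∈ Finset.range j, M :=
          Finset.sum_le_sum (fun k _ => abs_le.mp (hM _) |>.2)
      _ = (j : ℤ) * M := by simp [mul_comm]
  have ub2 : Sh (m : ZMod n) j ≤ ((n : ℤ) - j) * M := by
    have hsplit : Sh (m : ZMod n) j + Sh ((m : ZMod n) + (j : ZMod n)) (n - j) = 0 := by
      rw [← hadd (m : ZMod n) j (n - j), Nat.add_sub_cancel' hj, hfull]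
    have lb : -(((n : ℤ) - j) * M) ≤ Sh ((m : ZMod n) + (j : ZMod n)) (n - j) := by
      calc -(((n : ℤ) - j) * M) = ∑ k ∈ Finset.range (n - j), (-M) := by
            rw [Finset.sum_const, Finset.card_range, nsmul_eq_mul, Nat.cast_sub hj]
            ring
        _ ≤ Sh ((m : ZMod n) + (j : ZMod n)) (n - j) :=
            Finset.sum_le_sum (fun k _ => (abs_le.mp (hM _)).1)
    linarith
  have h2 : (2 : ℚ) * ((Sh (m : ZMod n) j : ℤ) : ℚ) ≤ (n : ℚ) * (M : ℚ) := by
    have c1 : ((Sh (m : ZMod n) j : ℤ) : ℚ) ≤ (j : ℚ) * (M : ℚ) := by exact_mod_cast ub1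
    have c2 : ((Sh (m : ZMod n) j : ℤ) : ℚ) ≤ ((n : ℚ) - (j : ℚ)) * (M : ℚ) := by
      exact_mod_cast ub2
    linarith
  show ((Sh (m : ZMod n) j : ℤ) : ℚ) ≤ (n * M) / 2
  linarith
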